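/- The Naive KAM implements Closed Call-by-Name: for every closed λ-term t, there is a complete weak-head-reduction sequence t →wh^n u if and only if there is a complete Naive KAM run ρ from the initial state (t, ε, ε) whose final state decodes to u and which contains exactly n β-transitions. -/

import Mathlib

set_option autoImplicit false

/-! λ-terms with variable names in ℕ. -/
inductive Term : Type
  | var : ℕ → Term
  | lam : ℕ → Term → Term
  | app : Term → Term → Term
deriving DecidableEq

namespace Term

/-- Free variables. -/
def fv : Term → Finset ℕ
  | var x => {x}
  | lam x t => fv t \ {x}
  | app t u => fv t ∪ fv u

/-- A term is closed if it has no free variables. -/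
def closed (t : Term) : Prop := t.fv = ∅

/-- Substitution of `u` for the free occurrences of `x`; it is capture-avoiding
whenever the substituted term `u` is closed, which is the only case arising in
Closed Call-by-Name. -/
def subst (x : ℕ) (u : Term) : Term → Term
  | var y => if y = x then u else var y
  | lam y t => if y = x then lam y t else lam y (subst x u t)
  | app t r => app (subst x u t) (subst x u r)

/-- In-order (left-to-right) enumeration of the constructors (as subterm occurrences). -/
def inorder : Term → List Term
  | var x => [var x]
  | lam x t => lam x t :: inorder t
  | app t u => inorder t ++ app t u :: inorder u

/-- Membership in the deterministic λ-calculus `Λdet`: the right subterm of every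
application is a variable or an abstraction. -/
def IsDet : Term → Prop
  | var _ => True
  | lam _ t => IsDet t
  | app t u => IsDet t ∧ IsDet u ∧ ((∃ x, u = var x) ∨ ∃ x r, u = lam x r)

end Term

/-- Weak head reduction: `(λx.t) u r1 … rh →wh t{x:=u} r1 … rh`. -/
inductive Whr : Term → Term → Prop
  | beta (x : ℕ) (t u : Term) : Whr (Term.app (Term.lam x t) u) (Term.subst x u t)
  | appL {t t' : Term} (u : Term) : Whr t t' → Whr (Term.app t u) (Term.app t' u)

def WhNormal (t : Term) : Prop := ∀ u, ¬ Whr t u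

/-- `NSteps R n a b`: exactly `n` `R`-steps from `a` to `b`. -/
inductive NSteps {α : Type _} (R : α → α → Prop) : ℕ → α → α → Prop
  | refl (a : α) : NSteps R 0 a a
  | head {a b c : α} {n : ℕ} : R a b → NSteps R n b c → NSteps R (n + 1) a c

/-! Closures and (local) environments. -/
mutual
  inductive Clo : Type
    | mk : Term → Env → Clo
  inductive Env : Type
    | nil : Env
    | cons : ℕ → Clo → Env → Env
end

def Env.lookup : Env → ℕ → Option Clo
  | .nil, _ => none
  | .cons y c e, x => if y = x then some c else Env.lookup e x

def Env.dom : Env → Finset ℕ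
  | .nil => ∅
  | .cons x _ e => insert x (Env.dom e)

/-- Restriction `e|s` of an environment to a set of variables. -/
def Env.restrict : Env → Finset ℕ → Env
  | .nil, _ => .nil
  | .cons x c e, s => if x ∈ s then .cons x c (Env.restrict e s) else Env.restrict e s

mutual
  /-- Decoding of a closure into a λ-term. -/
  def Clo.decode : Clo → Term
    | .mk t e => Env.decode t e
  /-- Decoding: `(t, ε)↓ = t`, `(t, [x←c]·e)↓ = (t{x:=c↓}, e)↓`. -/
  def Env.decode : Term → Env → Term
    | t, .nil => t
    | t, .cons x c e => Env.decode (Term.subst x (Clo.decode c) t) e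
end

mutual
  /-- Hereditary number of closures in a closure (without sharing). -/
  def Clo.count : Clo → ℕ
    | .mk _ e => 1 + Env.count e
  def Env.count : Env → ℕ
    | .nil => 0
    | .cons _ c e => Clo.count c + Env.count e
end

mutual
  /-- A closure `(t,e)` is closed: `fv t ⊆ dom e` and hereditarily so. -/
  def Clo.Closed : Clo → Prop
    | .mk t e => t.fv ⊆ e.dom ∧ Env.ClosedE e
  def Env.ClosedE : Env → Prop
    | .nil => True
    | .cons _ c e => Clo.Closed c ∧ Env.ClosedE e
end

mutual
  /-- Environment domain invariant: `dom e = fv t`, hereditarily. -/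
  def Clo.DomInv : Clo → Prop
    | .mk t e => e.dom = t.fv ∧ Env.DomInvE e
  def Env.DomInvE : Env → Prop
    | .nil => True
    | .cons _ c e => Clo.DomInv c ∧ Env.DomInvE e
end

/-- Size of the left address of (the first occurrence of) `u` in the code `t0`:
the binary length of its index in the in-order enumeration of the constructors of `t0`. -/
def addrSize (t0 u : Term) : ℕ := Nat.size (t0.inorder.idxOf u)

mutual
  /-- Size of a closure, relative to the initial code `t0`. -/
  def Clo.size : Term → Clo → ℕ
    | t0, .mk u e => addrSize t0 u + Env.sizeE t0 e
  /-- Size of an environment, relative to the initial code `t0`. -/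
  def Env.sizeE : Term → Env → ℕ
    | _, .nil => 0
    | t0, .cons x c e => addrSize t0 (Term.var x) + Clo.size t0 c + Env.sizeE t0 e
end

def stackSize (t0 : Term) (S : List Clo) : ℕ := (S.map (Clo.size t0)).sum

/-- States of the (Naive/Space) KAM. -/
structure State where
  tm : Term
  env : Env
  stk : List Clo

/-- Size of a state, relative to the initial code `t0`. -/
def State.size (t0 : Term) (s : State) : ℕ :=
  addrSize t0 s.tm + Env.sizeE t0 s.env + stackSize t0 s.stk

/-- Closure count of a state: total number of closures occurring in it,
hereditarily and without sharing (the active term/environment pair is a closure). -/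
def State.count (s : State) : ℕ :=
  1 + Env.count s.env + (s.stk.map Clo.count).sum

def State.decode (s : State) : Term :=
  s.stk.foldl (fun a c => Term.app a c.decode) (Env.decode s.tm s.env)

def initState (t : Term) : State := ⟨t, .nil, []⟩

/-! The Naive KAM. -/
inductive NK : State → State → Prop
  | sea (t u : Term) (e : Env) (S : List Clo) :
      NK ⟨.app t u, e, S⟩ ⟨t, e, .mk u e :: S⟩
  | beta (x : ℕ) (t : Term) (e : Env) (c : Clo) (S : List Clo) :
      NK ⟨.lam x t, e, c :: S⟩ ⟨t, .cons x c e, S⟩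
  | sub {x : ℕ} {e : Env} {u : Term} {e' : Env} (S : List Clo) :
      Env.lookup e x = some (.mk u e') → NK ⟨.var x, e, S⟩ ⟨u, e', S⟩

def NKFinal (s : State) : Prop := ∀ s', ¬ NK s s'

/-- Naive KAM runs counting the number of β-transitions. -/
inductive NKRun : ℕ → State → State → Prop
  | refl (s : State) : NKRun 0 s s
  | sea {t u : Term} {e : Env} {S : List Clo} {s' : State} {n : ℕ} :
      NKRun n ⟨t, e, .mk u e :: S⟩ s' → NKRun n ⟨.app t u, e, S⟩ s'
  | beta {x : ℕ} {t : Term} {e : Env} {c : Clo} {S : List Clo} {s' : State} {n : ℕ} :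
      NKRun n ⟨t, .cons x c e, S⟩ s' → NKRun (n + 1) ⟨.lam x t, e, c :: S⟩ s'
  | sub {x : ℕ} {e : Env} {u : Term} {e' : Env} {S : List Clo} {s' : State} {n : ℕ} :
      Env.lookup e x = some (.mk u e') → NKRun n ⟨u, e', S⟩ s' → NKRun n ⟨.var x, e, S⟩ s'

/-! The Space KAM. -/
inductive SK : State → State → Prop
  | seav {t : Term} {x : ℕ} {e : Env} {c : Clo} (S : List Clo) :
      Env.lookup e x = some c →
      SK ⟨.app t (.var x), e, S⟩ ⟨t, e.restrict t.fv, c :: S⟩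
  | seanv {t u : Term} {e : Env} (S : List Clo) :
      (∀ x, u ≠ .var x) →
      SK ⟨.app t u, e, S⟩ ⟨t, e.restrict t.fv, .mk u (e.restrict u.fv) :: S⟩
  | betaw {x : ℕ} {t : Term} {e : Env} (c : Clo) (S : List Clo) :
      x ∉ t.fv → SK ⟨.lam x t, e, c :: S⟩ ⟨t, e, S⟩
  | betanw {x : ℕ} {t : Term} {e : Env} (c : Clo) (S : List Clo) :
      x ∈ t.fv → SK ⟨.lam x t, e, c :: S⟩ ⟨t, .cons x c e, S⟩
  | sub {x : ℕ} {e : Env} {u : Term} {e' : Env} (S : List Clo) :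
      Env.lookup e x = some (.mk u e') → SK ⟨.var x, e, S⟩ ⟨u, e', S⟩

def SKFinal (s : State) : Prop := ∀ s', ¬ SK s s'

/-- Space KAM runs counting the number of β-transitions (`→βw` and `→β¬w`). -/
inductive SKRun : ℕ → State → State → Prop
  | refl (s : State) : SKRun 0 s s
  | seav {t : Term} {x : ℕ} {e : Env} {c : Clo} {S : List Clo} {s' : State} {n : ℕ} :
      Env.lookup e x = some c →
      SKRun n ⟨t, e.restrict t.fv, c :: S⟩ s' → SKRun n ⟨.app t (.var x), e, S⟩ s'
  | seanv {t u : Term} {e : Env} {S : List Clo} {s' : State} {n : ℕ} :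
      (∀ x, u ≠ .var x) →
      SKRun n ⟨t, e.restrict t.fv, .mk u (e.restrict u.fv) :: S⟩ s' →
      SKRun n ⟨.app t u, e, S⟩ s'
  | betaw {x : ℕ} {t : Term} {e : Env} {c : Clo} {S : List Clo} {s' : State} {n : ℕ} :
      x ∉ t.fv → SKRun n ⟨t, e, S⟩ s' → SKRun (n + 1) ⟨.lam x t, e, c :: S⟩ s'
  | betanw {x : ℕ} {t : Term} {e : Env} {c : Clo} {S : List Clo} {s' : State} {n : ℕ} :
      x ∈ t.fv → SKRun n ⟨t, .cons x c e, S⟩ s' → SKRun (n + 1) ⟨.lam x t, e, c :: S⟩ s'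
  | sub {x : ℕ} {e : Env} {u : Term} {e' : Env} {S : List Clo} {s' : State} {n : ℕ} :
      Env.lookup e x = some (.mk u e') → SKRun n ⟨u, e', S⟩ s' → SKRun n ⟨.var x, e, S⟩ s'

/-! Concrete combinators. -/

/-- I := λx.x -/
def tmI : Term := .lam 0 (.var 0)
/-- θ := λx.λy.y (x x y)  (variables: x := 0, y := 1) -/
def tmTheta : Term := .lam 0 (.lam 1 (.app (.var 1) (.app (.app (.var 0) (.var 0)) (.var 1))))
/-- fix := θ θ -/
def tmFix : Term := .app tmTheta tmTheta
/-- x x y -/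
def xxy : Term := .app (.app (.var 0) (.var 0)) (.var 1)
/-- toyaux := λf.λz. z f f I  (f := 3, z := 2) -/
def tmToyaux : Term := .lam 3 (.lam 2 (.app (.app (.app (.var 2) (.var 3)) (.var 3)) tmI))
/-- toy := fix toyaux -/
def tmToy : Term := .app tmFix tmToyaux

/-- Scott encoding of binary strings (false = 0, true = 1; x0 := 4, x1 := 5, xε := 6):
`⟨ε⟩ := λx0.λx1.λxε.xε`, `⟨b·r⟩ := λx0.λx1.λxε.xb ⟨r⟩`. -/
def encStr : List Bool → Term
  | [] => .lam 4 (.lam 5 (.lam 6 (.var 6)))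
  | b :: r => .lam 4 (.lam 5 (.lam 6 (.app (.var (if b then 5 else 4)) (encStr r))))

/-- A variable fresh for `t`. -/
def freshVar (t : Term) : ℕ := t.fv.sup id + 1

/-- η-expansion: `η(t) := λx. t x` with `x ∉ fv t`. -/
def Term.eta (t : Term) : Term := .lam (freshVar t) (.app t (.var (freshVar t)))

/-- n-fold η-expansion. -/
def etaN (n : ℕ) (t : Term) : Term := Term.eta^[n] t

/-! Environment families for the Naive KAM scrolling invariant
(variables: x := 0, y := 1, z := 2, f := 3, x0 := 4, x1 := 5, xε := 6). -/

/-- `e0 := [x←(θ,ε)]·[y←(toyaux,ε)]`, `e(i+1) := [x←(x,ei)]·[y←(y,ei)]`. -/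
def eE : ℕ → Env
  | 0 => .cons 0 (.mk tmTheta .nil) (.cons 1 (.mk tmToyaux .nil) .nil)
  | i + 1 => .cons 0 (.mk (.var 0) (eE i)) (.cons 1 (.mk (.var 1) (eE i)) .nil)

/-- `e″0 := ε`, `e″(i+1) := [xε←(I,e′i)]·[x1←(f,e′i)]·[x0←(f,e′i)]·e″i`
(with `e′i` inlined). -/
def eDD (s : List Bool) : ℕ → Env
  | 0 => .nil
  | i + 1 =>
    let ep : Env := .cons 2 (.mk (encStr (s.drop i)) (eDD s i)) (.cons 3 (.mk xxy (eE i)) .nil)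
    .cons 6 (.mk tmI ep) (.cons 5 (.mk (.var 3) ep) (.cons 4 (.mk (.var 3) ep) (eDD s i)))

/-- `e′i := [z←(⟨b(i+1)⋯bn⟩, e″i)]·[f←(x x y, ei)]`. -/
def eP (s : List Bool) (i : ℕ) : Env :=
  .cons 2 (.mk (encStr (s.drop i)) (eDD s i)) (.cons 3 (.mk xxy (eE i)) .nil)

/-! The family `tn` for the abstract-time overhead explosion
(variables `xi := i`). -/

/-- `x0 x1 ⋯ xn`. -/
def varsApp : ℕ → Term
  | 0 => .var 0
  | n + 1 => .app (varsApp n) (.var (n + 1))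

/-- Term component of `Sn`: `x0 x0` for `n = 0`, `x0 ⋯ xn` for `n ≥ 1`. -/
def sTerm : ℕ → Term
  | 0 => .app (.var 0) (.var 0)
  | n + 1 => varsApp (n + 1)

/-- `e0 := [x0←(I,ε)]`, `e(n+1) := [x(n+1)←Sn]·en`. -/
def eN : ℕ → Env
  | 0 => .cons 0 (.mk tmI .nil) .nil
  | n + 1 => .cons (n + 1) (.mk (sTerm n) (eN n)) (eN n)

/-- `Sn := (sTerm n, en)`. -/
def sClo (n : ℕ) : Clo := .mk (sTerm n) (eN n)

/-- `Ci⟨t⟩ := λxi. t (x0 ⋯ xi)` (with `C0⟨t⟩ = λx0. t (x0 x0)`). -/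
def cPlug (i : ℕ) (t : Term) : Term := .lam i (.app t (sTerm i))

/-- `C0⟨C1⟨⋯Cn⟨t⟩⋯⟩⟩`. -/
def nest (n : ℕ) (t : Term) : Term := (List.range (n + 1)).foldr cPlug t

/-- `tn := C0⟨C1⟨⋯Cn⟨λy.I⟩⋯⟩⟩ I`. -/
def tN (n : ℕ) : Term := .app (nest n (.lam 1 tmI)) tmI

/-! Global-copy scrolling terms (s′ := 7, z := 2, x := 0, f := 3). -/

/-- `λf.λs′. s′ f f z` (free variable z). -/
def tScroll : Term :=
  .lam 3 (.lam 7 (.app (.app (.app (.var 7) (.var 3)) (.var 3)) (.var 2)))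

/-- `glCpy := λx.( fix (λf.λs′. s′ f f x) ) x`. -/
def glCpy : Term :=
  .lam 0 (.app (.app tmFix
    (.lam 3 (.lam 7 (.app (.app (.app (.var 7) (.var 3)) (.var 3)) (.var 0)))))
    (.var 0))

/-! The Space LAM. -/

structure LState where
  dump : List (Clo × List Clo)
  tm : Term
  env : Env
  stk : List Clo

inductive LAM : LState → LState → Prop
  | sea {D : List (Clo × List Clo)} {t u : Term} {e : Env} {S : List Clo} :
      LAM ⟨D, .app t u, e, S⟩ ⟨(.mk t (e.restrict t.fv), S) :: D, u, e.restrict u.fv, []⟩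
  | ret {D : List (Clo × List Clo)} {u : Term} {e' : Env} {S : List Clo}
      {x : ℕ} {t : Term} {e : Env} :
      LAM ⟨(.mk u e', S) :: D, .lam x t, e, []⟩ ⟨D, u, e', .mk (.lam x t) e :: S⟩
  | betaw {D : List (Clo × List Clo)} {x : ℕ} {t : Term} {e : Env} {c : Clo} {S : List Clo} :
      x ∉ t.fv → LAM ⟨D, .lam x t, e, c :: S⟩ ⟨D, t, e, S⟩
  | betanw {D : List (Clo × List Clo)} {x : ℕ} {t : Term} {e : Env} {c : Clo} {S : List Clo} :
      x ∈ t.fv → LAM ⟨D, .lam x t, e, c :: S⟩ ⟨D, t, .cons x c e, S⟩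
  | sub {D : List (Clo × List Clo)} {x : ℕ} {e : Env} {u : Term} {e' : Env} {S : List Clo} :
      Env.lookup e x = some (.mk u e') → LAM ⟨D, .var x, e, S⟩ ⟨D, u, e', S⟩

def LFinal (ls : LState) : Prop := ∀ ls', ¬ LAM ls ls'

/-- The Space KAM state `(t,e,S)` seen as the Space LAM state `(ε,t,e,S)`. -/
def embed (s : State) : LState := ⟨[], s.tm, s.env, s.stk⟩

def lInit (t : Term) : LState := ⟨[], t, .nil, []⟩

def LState.size (t0 : Term) (ls : LState) : ℕ :=
  (ls.dump.map (fun p => Clo.size t0 p.1 + stackSize t0 p.2)).sum +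
    addrSize t0 ls.tm + Env.sizeE t0 ls.env + stackSize t0 ls.stk

/-- A LAM-sequence from `a` whose first state with empty dump after `a` is its target. -/
inductive LRunToEmpty : LState → LState → Prop
  | single {a b : LState} : LAM a b → b.dump = [] → LRunToEmpty a b
  | cons {a b c : LState} : LAM a b → b.dump ≠ [] → LRunToEmpty b c → LRunToEmpty a c

/-! Log-sensitive Turing machines. -/

/-- Input-tape alphabet {0, 1, L, R}. -/
inductive ISym : Type | zero | one | lend | rend
deriving DecidableEq

/-- Work-tape alphabet {0, 1, □}. -/
inductive WSym : Type | zero | one | blank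
deriving DecidableEq

/-- Head moves. -/
inductive Move : Type | L | R | N
deriving DecidableEq

/-- A log-sensitive Turing machine: states `Fin n`, initial state, final states
`qtrue = s1` and `qfalse = s0`, and a deterministic transition function reading the
current state and the two scanned symbols, writing on the work tape, moving both
heads, and changing state (`none` = halt). -/
structure TM where
  n : ℕ
  start : Fin n
  qtrue : Fin n
  qfalse : Fin n
  δ : Fin n → ISym → WSym → Option (Fin n × WSym × Move × Move)

/-- A configuration: state, input-head position (on the tape `L i R`), and the
work tape split as (left part, reversed) / scanned symbol / (right part). -/
structure Config (M : TM) where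
  q : Fin M.n
  ipos : ℕ
  wl : List WSym
  wcur : WSym
  wr : List WSym

/-- The symbol of the input tape `L i R` at a given position. -/
def inputAt (i : List Bool) (p : ℕ) : ISym :=
  if p = 0 then .lend
  else if h : p - 1 < i.length then (if i.get ⟨p - 1, h⟩ then .one else .zero)
  else .rend

def moveIpos (p : ℕ) : Move → ℕ
  | .L => p - 1
  | .R => p + 1
  | .N => p

def moveWork (wl : List WSym) (c : WSym) (wr : List WSym) : Move → List WSym × WSym × List WSym
  | .L => match wl with
    | [] => ([], .blank, c :: wr)
    | a :: l => (l, a, c :: wr)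
  | .R => match wr with
    | [] => (c :: wl, .blank, [])
    | a :: r => (c :: wl, a, r)
  | .N => (wl, c, wr)

/-- One transition of the TM `M` on input `i`. -/
def TMStep (M : TM) (i : List Bool) (c c' : Config M) : Prop :=
  ∃ q' w mi mw, M.δ c.q (inputAt i c.ipos) c.wcur = some (q', w, mi, mw) ∧
    c'.q = q' ∧ c'.ipos = moveIpos c.ipos mi ∧
    (c'.wl, c'.wcur, c'.wr) = moveWork c.wl w c.wr mw

def initConfig (M : TM) : Config M := ⟨M.start, 0, [], .blank, []⟩

/-- Number of work-tape cells used by a configuration. -/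
def Config.workSize {M : TM} (c : Config M) : ℕ := c.wl.length + 1 + c.wr.length

def TMFinal (M : TM) (i : List Bool) (c : Config M) : Prop := ∀ c', ¬ TMStep M i c c'

/-- `⟨1⟩ := λx.λy.x` and `⟨0⟩ := λx.λy.y`. -/
def encBool (b : Bool) : Term :=
  if b then .lam 0 (.lam 1 (.var 0)) else .lam 0 (.lam 1 (.var 1))

/-! Auxiliary development for STATEMENT 0. -/

namespace KAMProof

/-- Remove all entries for `x` from an environment. -/
def rm (x : ℕ) : Env → Env
  | .nil => .nil
  | .cons y c e => if y = x then rm x e else .cons y c (rm x e)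

/-- A simple size on terms. -/
def tsize : Term → ℕ
  | .var _ => 1
  | .lam _ t => tsize t + 1
  | .app t u => tsize t + tsize u + 1

theorem mem_fv_subst {x a : ℕ} {u : Term} {t : Term} (h : a ∈ (Term.subst x u t).fv) :
    (a ∈ t.fv ∧ a ≠ x) ∨ a ∈ u.fv := by
  induction t with
  | var y =>
    by_cases hyx : y = x
    · simp only [Term.subst, if_pos hyx] at h
      exact Or.inr h
    · simp only [Term.subst, if_neg hyx, Term.fv, Finset.mem_singleton] at h
      subst h
      exact Or.inl ⟨by simp [Term.fv], hyx⟩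
  | lam y t ih =>
    by_cases hyx : y = x
    · simp only [Term.subst, if_pos hyx] at h
      refine Or.inl ⟨h, ?_⟩
      simp only [Term.fv, Finset.mem_sdiff, Finset.mem_singleton] at h
      exact hyx ▸ h.2
    · simp only [Term.subst, if_neg hyx, Term.fv, Finset.mem_sdiff,
        Finset.mem_singleton] at h
      rcases ih h.1 with ⟨h1, h2⟩ | h1
      · exact Or.inl ⟨by
          simp only [Term.fv, Finset.mem_sdiff, Finset.mem_singleton]
          exact ⟨h1, h.2⟩, h2⟩
      · exact Or.inr h1
  | app t r iht ihr =>
    simp only [Term.subst, Term.fv, Finset.mem_union] at h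
    simp only [Term.fv, Finset.mem_union]
    rcases h with h | h
    · rcases iht h with ⟨h1, h2⟩ | h1
      · exact Or.inl ⟨Or.inl h1, h2⟩
      · exact Or.inr h1
    · rcases ihr h with ⟨h1, h2⟩ | h1
      · exact Or.inl ⟨Or.inr h1, h2⟩
      · exact Or.inr h1

theorem subst_of_not_mem {x : ℕ} {t : Term} (u : Term) (h : x ∉ t.fv) :
    Term.subst x u t = t := by
  induction t with
  | var y =>
    simp only [Term.fv, Finset.mem_singleton] at h
    simp only [Term.subst, if_neg (fun hh : y = x => h hh.symm)]
  | lam y t ih =>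
    by_cases hxy : y = x
    · simp [Term.subst, hxy]
    · simp only [Term.fv, Finset.mem_sdiff, Finset.mem_singleton] at h
      have hx : x ∉ t.fv := fun hxf => h ⟨hxf, fun hh => hxy hh.symm⟩
      simp [Term.subst, hxy, ih hx]
  | app t r iht ihr =>
    simp only [Term.fv, Finset.mem_union] at h
    push_neg at h
    simp [Term.subst, iht h.1, ihr h.2]

theorem not_mem_fv_subst_self {x : ℕ} {u : Term} (hu : u.fv = ∅) (t : Term) :
    x ∉ (Term.subst x u t).fv := by
  intro hx
  rcases mem_fv_subst hx with ⟨_, h2⟩ | h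
  · exact h2 rfl
  · simp [hu] at h

theorem subst_comm {x y : ℕ} (hxy : x ≠ y) {u v : Term}
    (hu : u.fv = ∅) (hv : v.fv = ∅) (t : Term) :
    Term.subst y v (Term.subst x u t) = Term.subst x u (Term.subst y v t) := by
  induction t with
  | var z =>
    by_cases hzx : z = x
    · subst hzx
      rw [show Term.subst z u (Term.var z) = u by simp [Term.subst]]
      rw [show Term.subst y v (Term.var z) = Term.var z by
        simp [Term.subst, fun hh : z = y => hxy hh]]
      rw [show Term.subst z u (Term.var z) = u by simp [Term.subst]]
      exact subst_of_not_mem v (by simp [hu])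
    · by_cases hzy : z = y
      · subst hzy
        rw [show Term.subst x u (Term.var z) = Term.var z by simp [Term.subst, hzx]]
        rw [show Term.subst z v (Term.var z) = v by simp [Term.subst]]
        exact (subst_of_not_mem u (by simp [hv])).symm
      · simp [Term.subst, hzx, hzy]
  | lam z t ih =>
    by_cases hzx : z = x
    · subst hzx
      rw [show Term.subst z u (Term.lam z t) = Term.lam z t by simp [Term.subst]]
      rw [show Term.subst y v (Term.lam z t) = Term.lam z (Term.subst y v t) by
        simp only [Term.subst, if_neg (fun hh : z = y => hxy hh)]]
      rw [show Term.subst z u (Term.lam z (Term.subst y v t))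
          = Term.lam z (Term.subst y v t) by simp [Term.subst]]
    · by_cases hzy : z = y
      · subst hzy
        rw [show Term.subst x u (Term.lam z t) = Term.lam z (Term.subst x u t) by
          simp only [Term.subst, if_neg hzx]]
        rw [show Term.subst z v (Term.lam z (Term.subst x u t))
            = Term.lam z (Term.subst x u t) by simp [Term.subst]]
        rw [show Term.subst z v (Term.lam z t) = Term.lam z t by simp [Term.subst]]
        rw [show Term.subst x u (Term.lam z t) = Term.lam z (Term.subst x u t) by
          simp only [Term.subst, if_neg hzx]]
      · rw [show Term.subst x u (Term.lam z t) = Term.lam z (Term.subst x u t) by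
          simp only [Term.subst, if_neg hzx]]
        rw [show Term.subst y v (Term.lam z t) = Term.lam z (Term.subst y v t) by
          simp only [Term.subst, if_neg hzy]]
        rw [show Term.subst y v (Term.lam z (Term.subst x u t))
            = Term.lam z (Term.subst y v (Term.subst x u t)) by
          simp only [Term.subst, if_neg hzy]]
        rw [show Term.subst x u (Term.lam z (Term.subst y v t))
            = Term.lam z (Term.subst x u (Term.subst y v t)) by
          simp only [Term.subst, if_neg hzx]]
        rw [ih]
  | app t r iht ihr => simp [Term.subst, iht, ihr]

theorem count_pos (c : Clo) : 1 ≤ Clo.count c := by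
  obtain ⟨t, e⟩ := c; simp [Clo.count]

theorem lookup_count_le {x : ℕ} {c : Clo} :
    (e : Env) → Env.lookup e x = some c → Clo.count c ≤ Env.count e
  | .nil, h => by simp [Env.lookup] at h
  | .cons y c' e, h => by
    simp only [Env.lookup] at h
    by_cases hyx : y = x
    · rw [if_pos hyx] at h
      injection h with h
      subst h
      simp only [Env.count]
      omega
    · rw [if_neg hyx] at h
      have := lookup_count_le e h
      simp only [Env.count]
      omega

theorem lookup_closed {x : ℕ} {c : Clo} :
    (e : Env) → Env.ClosedE e → Env.lookup e x = some c → Clo.Closed c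
  | .nil, _, h => by simp [Env.lookup] at h
  | .cons y c' e, he, h => by
    obtain ⟨hc', he'⟩ := he
    simp only [Env.lookup] at h
    by_cases hyx : y = x
    · rw [if_pos hyx] at h
      injection h with h
      exact h ▸ hc'
    · rw [if_neg hyx] at h
      exact lookup_closed e he' h

theorem lookup_of_mem_dom {x : ℕ} :
    (e : Env) → x ∈ Env.dom e → ∃ c, Env.lookup e x = some c
  | .nil, h => by simp [Env.dom] at h
  | .cons y c' e, h => by
    by_cases hyx : y = x
    · exact ⟨c', by simp [Env.lookup, hyx]⟩
    · simp only [Env.dom, Finset.mem_insert] at h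
      rcases h with h | h
      · exact absurd h.symm hyx
      · obtain ⟨c, hc⟩ := lookup_of_mem_dom e h
        exact ⟨c, by simp [Env.lookup, hyx, hc]⟩

theorem fv_decode : (t : Term) → (e : Env) → Env.ClosedE e →
    (Env.decode t e).fv ⊆ t.fv \ e.dom
  | t, .nil, _ => by simp [Env.decode, Env.dom]
  | t, .cons x (.mk v ec) e', he => by
    obtain ⟨hc, he'⟩ := he
    obtain ⟨h1, h2⟩ := hc
    have hcc : (Clo.decode (.mk v ec)).fv = ∅ := by
      have hsub := fv_decode v ec h2
      simp only [Clo.decode]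
      refine Finset.subset_empty.mp (hsub.trans ?_)
      intro a ha
      simp only [Finset.mem_sdiff] at ha
      exact absurd (h1 ha.1) ha.2
    have ih := fv_decode (Term.subst x (Clo.decode (.mk v ec)) t) e' he'
    simp only [Env.decode, Env.dom]
    intro a ha
    have hmem := ih ha
    simp only [Finset.mem_sdiff] at hmem
    rcases mem_fv_subst hmem.1 with ⟨hm1, hm2⟩ | hm1
    · simp only [Finset.mem_sdiff, Finset.mem_insert]
      exact ⟨hm1, fun hh => by
        rcases hh with hh | hh
        · exact hm2 hh
        · exact hmem.2 hh⟩
    · rw [hcc] at hm1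
      simp at hm1
  termination_by t e => Env.count e
  decreasing_by
    · simp only [Env.count, Clo.count]; omega
    · simp only [Env.count, Clo.count]; omega

theorem clo_decode_closed {c : Clo} (hc : Clo.Closed c) : (Clo.decode c).fv = ∅ := by
  obtain ⟨v, ec⟩ := c
  obtain ⟨h1, h2⟩ := hc
  have hsub := fv_decode v ec h2
  simp only [Clo.decode]
  refine Finset.subset_empty.mp (hsub.trans ?_)
  intro a ha
  simp only [Finset.mem_sdiff] at ha
  exact absurd (h1 ha.1) ha.2

theorem decode_app : (t u : Term) → (e : Env) →
    Env.decode (.app t u) e = .app (Env.decode t e) (Env.decode u e)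
  | t, u, .nil => by simp [Env.decode]
  | t, u, .cons x c e => by
    simp only [Env.decode, Term.subst]
    exact decode_app _ _ e

theorem decode_closed_id {t : Term} (h : t.fv = ∅) : (e : Env) → Env.decode t e = t
  | .nil => by simp [Env.decode]
  | .cons x c e => by
    simp only [Env.decode]
    rw [subst_of_not_mem _ (by simp [h])]
    exact decode_closed_id h e

theorem decode_var {x : ℕ} {c : Clo} :
    (e : Env) → Env.ClosedE e → Env.lookup e x = some c →
    Env.decode (.var x) e = Clo.decode c
  | .nil, _, h => by simp [Env.lookup] at h
  | .cons y c' e, he, h => by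
    obtain ⟨hc', he'⟩ := he
    simp only [Env.lookup] at h
    by_cases hyx : y = x
    · rw [if_pos hyx] at h
      injection h with h
      rw [← h]
      simp only [Env.decode]
      rw [show Term.subst y (Clo.decode c') (Term.var x) = Clo.decode c' by
        simp only [Term.subst, if_pos hyx.symm]]
      exact decode_closed_id (clo_decode_closed hc') e
    · rw [if_neg hyx] at h
      simp only [Env.decode]
      rw [show Term.subst y (Clo.decode c') (Term.var x) = Term.var x by
        simp only [Term.subst, if_neg (fun hh : x = y => hyx hh.symm)]]
      exact decode_var e he' h

theorem decode_lam (y : ℕ) : (t : Term) → (e : Env) →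
    Env.decode (.lam y t) e = .lam y (Env.decode t (rm y e))
  | t, .nil => by simp [Env.decode, rm]
  | t, .cons z c e => by
    by_cases hzy : z = y
    · subst hzy
      simp only [Env.decode, rm, if_pos rfl]
      rw [show Term.subst z (Clo.decode c) (Term.lam z t) = Term.lam z t by
        simp [Term.subst]]
      exact decode_lam z t e
    · simp only [Env.decode, rm, if_neg hzy]
      rw [show Term.subst z (Clo.decode c) (Term.lam y t)
          = Term.lam y (Term.subst z (Clo.decode c) t) by
        simp only [Term.subst, if_neg (fun hh : y = z => hzy hh.symm)]]
      rw [decode_lam y (Term.subst z (Clo.decode c) t) e]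

theorem subst_decode {x : ℕ} {U : Term} (hU : U.fv = ∅) :
    (t : Term) → (e : Env) → Env.ClosedE e →
    Term.subst x U (Env.decode t (rm x e)) = Env.decode (Term.subst x U t) e
  | t, .nil, _ => by simp [Env.decode, rm]
  | t, .cons y c e, he => by
    obtain ⟨hc, he'⟩ := he
    have hV : (Clo.decode c).fv = ∅ := clo_decode_closed hc
    by_cases hyx : y = x
    · subst hyx
      simp only [rm, if_pos rfl, Env.decode]
      rw [subst_of_not_mem _ (not_mem_fv_subst_self hU t)]
      exact subst_decode hU t e he'
    · simp only [rm, if_neg hyx, Env.decode]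
      rw [subst_comm (fun h : x = y => hyx h.symm) hU hV t]
      exact subst_decode hU _ e he'

/-! Weak head reduction facts. -/

theorem whr_stack {a b : Term} (h : Whr a b) (S : List Clo) :
    Whr (S.foldl (fun a c => Term.app a c.decode) a)
        (S.foldl (fun a c => Term.app a c.decode) b) := by
  induction S generalizing a b with
  | nil => exact h
  | cons c S ih => exact ih (Whr.appL _ h)

theorem whr_det {a b b' : Term} (h1 : Whr a b) (h2 : Whr a b') : b = b' := by
  induction h1 generalizing b' with
  | beta x t u =>
    cases h2 with
    | beta => rfl
    | appL _ h => cases h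
  | appL u h ih =>
    cases h2 with
    | beta => cases h
    | appL _ h' => rw [ih h']

theorem whnormal_lam (x : ℕ) (t : Term) : WhNormal (.lam x t) := by
  intro u h; cases h

theorem nsteps_normal {a : Term} (h : WhNormal a) {n : ℕ} {b : Term}
    (hs : NSteps Whr n a b) : n = 0 ∧ b = a := by
  cases hs with
  | refl => exact ⟨rfl, rfl⟩
  | head hstep _ => exact absurd hstep (h _)

/-! The machine invariant. -/

def Inv (s : State) : Prop :=
  s.tm.fv ⊆ s.env.dom ∧ Env.ClosedE s.env ∧ ∀ c ∈ s.stk, Clo.Closed c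

theorem decode_sea (t u : Term) (e : Env) (S : List Clo) :
    State.decode ⟨.app t u, e, S⟩ = State.decode ⟨t, e, .mk u e :: S⟩ := by
  simp [State.decode, decode_app, Clo.decode]

theorem decode_sub {x : ℕ} {e : Env} {u : Term} {e' : Env} (S : List Clo)
    (he : Env.ClosedE e) (h : Env.lookup e x = some (.mk u e')) :
    State.decode ⟨.var x, e, S⟩ = State.decode ⟨u, e', S⟩ := by
  simp only [State.decode]
  rw [decode_var e he h, Clo.decode]

theorem decode_beta {x : ℕ} {t : Term} {e : Env} {c : Clo} (S : List Clo)
    (he : Env.ClosedE e) (hc : Clo.Closed c) :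
    Whr (State.decode ⟨.lam x t, e, c :: S⟩) (State.decode ⟨t, .cons x c e, S⟩) := by
  simp only [State.decode, List.foldl_cons]
  rw [decode_lam]
  have h1 : Env.decode t (.cons x c e)
      = Env.decode (Term.subst x (Clo.decode c) t) e := rfl
  rw [h1, ← subst_decode (clo_decode_closed hc) t e he]
  exact whr_stack (Whr.beta x _ (Clo.decode c)) S

theorem inv_app {t u : Term} {e : Env} {S : List Clo}
    (hi : Inv ⟨.app t u, e, S⟩) : Inv ⟨t, e, .mk u e :: S⟩ := by
  obtain ⟨h1, h2, h3⟩ := hi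
  simp only [Term.fv] at h1
  refine ⟨fun a ha => h1 (Finset.mem_union_left _ ha), h2, ?_⟩
  intro c hc
  rcases List.mem_cons.mp hc with h | h
  · subst h; exact ⟨fun a ha => h1 (Finset.mem_union_right _ ha), h2⟩
  · exact h3 c h

theorem inv_beta {x : ℕ} {t : Term} {e : Env} {c : Clo} {S : List Clo}
    (hi : Inv ⟨.lam x t, e, c :: S⟩) : Inv ⟨t, .cons x c e, S⟩ := by
  obtain ⟨h1, h2, h3⟩ := hi
  simp only [Term.fv] at h1
  refine ⟨?_, ⟨h3 c List.mem_cons_self, h2⟩,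
    fun d hd => h3 d (List.mem_cons_of_mem _ hd)⟩
  intro a ha
  simp only [Env.dom, Finset.mem_insert]
  by_cases hax : a = x
  · exact Or.inl hax
  · exact Or.inr (h1 (Finset.mem_sdiff.mpr ⟨ha, Finset.notMem_singleton.mpr hax⟩))

theorem inv_sub {x : ℕ} {e : Env} {u : Term} {e' : Env} {S : List Clo}
    (hi : Inv ⟨.var x, e, S⟩) (h : Env.lookup e x = some (.mk u e')) :
    Inv ⟨u, e', S⟩ := by
  obtain ⟨_, h2, h3⟩ := hi
  have hc := lookup_closed e h2 h
  exact ⟨hc.1, hc.2, h3⟩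

theorem run_sound {n : ℕ} {s s' : State} (h : NKRun n s s') (hi : Inv s) :
    NSteps Whr n s.decode s'.decode ∧ Inv s' := by
  induction h with
  | refl => exact ⟨NSteps.refl _, hi⟩
  | sea h ih =>
    obtain ⟨hs, hinv⟩ := ih (inv_app hi)
    exact ⟨by rw [decode_sea]; exact hs, hinv⟩
  | @beta x t e c S _ _ h ih =>
    obtain ⟨hs, hinv⟩ := ih (inv_beta hi)
    exact ⟨NSteps.head
      (decode_beta S hi.2.1 (hi.2.2 c List.mem_cons_self)) hs, hinv⟩
  | @sub x e u e' S _ _ hl h ih =>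
    obtain ⟨hs, hinv⟩ := ih (inv_sub hi hl)
    exact ⟨by rw [decode_sub S hi.2.1 hl]; exact hs, hinv⟩

theorem final_lam_nil (x : ℕ) (t : Term) (e : Env) : NKFinal ⟨.lam x t, e, []⟩ := by
  intro s' h
  cases h

theorem final_shape {s : State} (hi : Inv s) (hf : NKFinal s) :
    ∃ x t e, s = ⟨.lam x t, e, []⟩ := by
  obtain ⟨tm, e, S⟩ := s
  cases tm with
  | var x =>
    have hx : x ∈ Env.dom e := hi.1 (by simp [Term.fv])
    obtain ⟨c, hc⟩ := lookup_of_mem_dom e hx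
    obtain ⟨v, ec⟩ := c
    exact absurd (NK.sub S hc) (hf _)
  | lam x t =>
    cases S with
    | nil => exact ⟨x, t, e, rfl⟩
    | cons c S => exact absurd (NK.beta x t e c S) (hf _)
  | app t u => exact absurd (NK.sea t u e S) (hf _)

theorem nsteps_step {n : ℕ} {a d u : Term} (hs : NSteps Whr n a u)
    (hd : Whr a d) (hn : WhNormal u) : ∃ m, n = m + 1 ∧ NSteps Whr m d u := by
  cases hs with
  | refl => exact absurd hd (hn _)
  | head h1 h2 => exact ⟨_, rfl, (whr_det h1 hd) ▸ h2⟩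

theorem run_complete (u : Term) : (n : ℕ) → (s : State) → Inv s →
    NSteps Whr n s.decode u → WhNormal u →
    ∃ s', NKRun n s s' ∧ NKFinal s' ∧ s'.decode = u
  | n, ⟨.var x, e, S⟩, hi, hs, hn => by
    have hx : x ∈ Env.dom e := hi.1 (by simp [Term.fv])
    obtain ⟨c, hc⟩ := lookup_of_mem_dom e hx
    obtain ⟨v, ec⟩ := c
    rw [decode_sub S hi.2.1 hc] at hs
    have hcount : 1 + Env.count ec ≤ Env.count e := lookup_count_le e hc
    obtain ⟨s', hr, hf, hd⟩ := run_complete u n ⟨v, ec, S⟩ (inv_sub hi hc) hs hn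
    exact ⟨s', NKRun.sub hc hr, hf, hd⟩
  | n, ⟨.app t v, e, S⟩, hi, hs, hn => by
    rw [decode_sea] at hs
    obtain ⟨s', hr, hf, hd⟩ := run_complete u n ⟨t, e, .mk v e :: S⟩ (inv_app hi) hs hn
    exact ⟨s', NKRun.sea hr, hf, hd⟩
  | n, ⟨.lam x t, e, []⟩, hi, hs, hn => by
    have hnorm : WhNormal (State.decode ⟨.lam x t, e, []⟩) := by
      have hdec : State.decode ⟨.lam x t, e, []⟩
          = .lam x (Env.decode t (rm x e)) := by
        simp [State.decode, decode_lam]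
      rw [hdec]; exact whnormal_lam _ _
    obtain ⟨hn0, hu⟩ := nsteps_normal hnorm hs
    subst hn0
    exact ⟨⟨.lam x t, e, []⟩, NKRun.refl _, final_lam_nil x t e, hu.symm⟩
  | n, ⟨.lam x t, e, c :: S'⟩, hi, hs, hn => by
    have hstep := decode_beta (x := x) (t := t) (e := e) (c := c) S'
      hi.2.1 (hi.2.2 c List.mem_cons_self)
    obtain ⟨m, hm, h2⟩ := nsteps_step hs hstep hn
    obtain ⟨s', hr, hf, hd⟩ :=
      run_complete u m ⟨t, .cons x c e, S'⟩ (inv_beta hi) h2 hn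
    exact ⟨s', by rw [hm]; exact NKRun.beta hr, hf, hd⟩
termination_by n s => (n, Env.count s.env, tsize s.tm)
decreasing_by all_goals
  simp_wf
  simp only [Prod.lex_def, tsize, true_and]
  omega

end KAMProof

/-- The Naive KAM implements Closed Call-by-Name. -/
theorem naive_kam_implements_closed_cbn
    (t : Term) (ht : t.closed) (n : ℕ) (u : Term) :
    (NSteps Whr n t u ∧ WhNormal u) ↔
      (∃ s : State, NKRun n (initState t) s ∧ NKFinal s ∧ s.decode = u) := by
  have hinv : KAMProof.Inv (initState t) := by
    refine ⟨?_, trivial, ?_⟩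
    · simp only [initState]
      rw [ht]
      exact Finset.empty_subset _
    · simp [initState]
  have hdec : State.decode (initState t) = t := by
    simp [initState, State.decode, Env.decode]
  constructor
  · rintro ⟨hs, hn⟩
    obtain ⟨s', hr, hf, hd⟩ :=
      KAMProof.run_complete u n (initState t) hinv (by rw [hdec]; exact hs) hn
    exact ⟨s', hr, hf, hd⟩
  · rintro ⟨s, hr, hf, hd⟩
    obtain ⟨hs, hinv'⟩ := KAMProof.run_sound hr hinv
    rw [hdec, hd] at hs
    refine ⟨hs, ?_⟩
    obtain ⟨x, t', e, rfl⟩ := KAMProof.final_shape hinv' hf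
    rw [← hd]
    have hlam : State.decode ⟨.lam x t', e, []⟩
        = .lam x (Env.decode t' (KAMProof.rm x e)) := by
      simp [State.decode, KAMProof.decode_lam]
    rw [hlam]
    exact KAMProof.whnormal_lam _ _
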